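/- arXiv:2112.07526 — 2 statements merged into one kernel-verified Lean document; each statement's English description precedes it below -/
import Mathlib

section
/- For every integer k ≥ 0 and indeterminate x, the formal power series identity holds: -(x²+x)·A_{2k,x}(y) - y²·A''_{2k,x}(y) + 2xy·A'_{2k,x}(y) + (x²-x)·A_{2k,x-1}(y) = y·A''_{2k,x}(y) - 2·A'_{2k,x}(y) + (2/(2k-1))·Σ_{h≥k} (2h-4k+3)·C(2h, 2k-2)·A_{2h,x}(y)/y, where A_{k,x}(y) = (1/k!)(1+y)^x log^k(1+y). -/
open Finset

/-- Generalized binomial coefficient `C(x, n) = x(x-1)⋯(x-n+1)/n!` as a function of `x : ℚ`. -/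
noncomputable def myChoose (x : ℚ) (n : ℕ) : ℚ :=
  (∏ i ∈ Finset.range n, (x - (i : ℚ))) / (n.factorial : ℚ)

/-- Unsigned Stirling numbers of the first kind, `(x)_n = Σ_k stirling1 n k · x^k`. -/
def stirling1 : ℕ → ℕ → ℕ
  | 0, 0 => 1
  | 0, _ + 1 => 0
  | n + 1, 0 => n * stirling1 n 0
  | n + 1, k + 1 => n * stirling1 n (k + 1) + stirling1 n k

/-- Stirling numbers of the second kind. -/
def stirling2 : ℕ → ℕ → ℕ
  | 0, 0 => 1
  | 0, _ + 1 => 0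
  | _ + 1, 0 => 0
  | n + 1, k + 1 => (k + 1) * stirling2 n (k + 1) + stirling2 n k

/-- The formal power series `log(1+y) = Σ_{n ≥ 1} (-1)^{n-1} y^n / n`. -/
noncomputable def log1p : PowerSeries ℚ :=
  PowerSeries.mk fun n => if n = 0 then 0 else (-1 : ℚ) ^ (n + 1) / (n : ℚ)

/-- The formal binomial series `(1+y)^x = Σ_n C(x,n) y^n`. -/
noncomputable def binomSeries (x : ℚ) : PowerSeries ℚ :=
  PowerSeries.mk fun n => myChoose x n

/-- `A_{k,x}(y) = (1/k!) (1+y)^x log^k(1+y)`. -/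
noncomputable def Aser (k : ℕ) (x : ℚ) : PowerSeries ℚ :=
  ((k.factorial : ℚ)⁻¹) • (binomSeries x * log1p ^ k)

/-- Formal derivative in `y`. -/
noncomputable def Dy (f : PowerSeries ℚ) : PowerSeries ℚ :=
  PowerSeries.mk fun n => ((n + 1 : ℕ) : ℚ) * PowerSeries.coeff (n + 1) f

open PowerSeries

lemma Dy_eq (f : PowerSeries ℚ) : Dy f = d⁄dX ℚ f := by
  ext n
  simp [Dy, coeff_derivative, mul_comm]

noncomputable def Vser : PowerSeries ℚ := PowerSeries.mk fun n => (-1 : ℚ) ^ n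

lemma coeff_Vser (n : ℕ) : coeff n Vser = (-1)^n := by simp [Vser]

lemma hUV : ((1 + X : ℚ⟦X⟧)) * Vser = 1 := by
  ext n
  rcases n with _ | m
  · simp [Vser, coeff_mul]
  · rw [add_mul, one_mul, map_add, coeff_succ_X_mul]
    simp [Vser, pow_succ]

lemma hDyL : d⁄dX ℚ log1p = Vser := by
  ext n
  rw [coeff_derivative]
  simp only [log1p, coeff_mk, Vser, Nat.succ_ne_zero, if_false]
  field_simp
  push_cast
  ring

lemma myChoose_zero (x : ℚ) : myChoose x 0 = 1 := by simp [myChoose]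

lemma myChoose_pascal (x : ℚ) (n : ℕ) :
    myChoose x (n+1) + myChoose x n = myChoose (x+1) (n+1) := by
  have h1 : (∏ i ∈ Finset.range (n+1), (x + 1 - (i : ℚ)))
      = (x+1) * ∏ i ∈ Finset.range n, (x - (i : ℚ)) := by
    rw [Finset.prod_range_succ']
    simp only [Nat.cast_add, Nat.cast_one]
    rw [mul_comm]
    congr 1
    · norm_num
    · apply Finset.prod_congr rfl; intro i _; push_cast; ring
  have h2 : (∏ i ∈ Finset.range (n+1), (x - (i : ℚ)))
      = (∏ i ∈ Finset.range n, (x - (i : ℚ))) * (x - n) := Finset.prod_range_succ _ _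
  have hf : ((n+1).factorial : ℚ) = (n+1) * (n.factorial : ℚ) := by
    rw [Nat.factorial_succ]; push_cast; ring
  simp only [myChoose, h1, h2, hf]
  have hn : (n.factorial : ℚ) ≠ 0 := Nat.cast_ne_zero.mpr n.factorial_ne_zero
  have hn1 : ((n:ℚ)+1) ≠ 0 := by positivity
  field_simp
  ring

lemma hBU (x : ℚ) : binomSeries x * (1 + X) = binomSeries (x+1) := by
  ext n
  rw [mul_add, mul_one, map_add]
  rcases n with _ | m
  · simp [binomSeries, coeff_mul, myChoose_zero]
  · rw [mul_comm (binomSeries x) X, coeff_succ_X_mul]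
    simp only [binomSeries, coeff_mk]
    have := myChoose_pascal x m
    linarith

lemma hBV (x : ℚ) : binomSeries (x-1) = binomSeries x * Vser := by
  have h := hBU (x-1)
  rw [sub_add_cancel] at h
  calc binomSeries (x-1) = binomSeries (x-1) * ((1+X) * Vser) := by rw [hUV, mul_one]
    _ = (binomSeries (x-1) * (1+X)) * Vser := by ring
    _ = binomSeries x * Vser := by rw [h]

lemma myChoose_succ (x : ℚ) (n : ℕ) :
    ((n:ℚ)+1) * myChoose x (n+1) = x * myChoose (x-1) n := by
  have h1 : (∏ i ∈ Finset.range (n+1), (x - (i : ℚ)))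
      = x * ∏ i ∈ Finset.range n, (x - 1 - (i : ℚ)) := by
    rw [Finset.prod_range_succ']
    rw [mul_comm]
    congr 1
    · norm_num
    · apply Finset.prod_congr rfl; intro i _; push_cast; ring
  have hf : ((n+1).factorial : ℚ) = (n+1) * (n.factorial : ℚ) := by
    rw [Nat.factorial_succ]; push_cast; ring
  simp only [myChoose, h1, hf]
  have hn : (n.factorial : ℚ) ≠ 0 := Nat.cast_ne_zero.mpr n.factorial_ne_zero
  have hn1 : ((n:ℚ)+1) ≠ 0 := by positivity
  field_simp

lemma hDB (x : ℚ) : d⁄dX ℚ (binomSeries x) = PowerSeries.C x * binomSeries (x-1) := by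
  ext n
  rw [coeff_derivative, coeff_C_mul]
  simp only [binomSeries, coeff_mk]
  push_cast
  rw [mul_comm, ← myChoose_succ]

open Finset PowerSeries

lemma X_dvd_L : (X : ℚ⟦X⟧) ∣ log1p := by
  rw [PowerSeries.X_dvd_iff, ← PowerSeries.coeff_zero_eq_constantCoeff_apply]
  simp [log1p]

lemma ordL {q m : ℕ} (h : q < m) : coeff q (log1p ^ m) = 0 := by
  have : (X : ℚ⟦X⟧)^m ∣ log1p ^ m := pow_dvd_pow_of_dvd X_dvd_L m
  exact PowerSeries.X_pow_dvd_iff.mp this q h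

lemma hUDyL : ((1 + X : ℚ⟦X⟧)) * d⁄dX ℚ log1p = 1 := by rw [hDyL]; exact hUV

lemma keyrec (m : ℕ) : ((1 + X : ℚ⟦X⟧)) * d⁄dX ℚ (log1p ^ (m+1)) = ((m:ℚ)+1) • log1p ^ m := by
  rw [Derivation.leibniz_pow, Nat.add_sub_cancel, nsmul_eq_mul, smul_eq_mul, smul_eq_C_mul]
  rw [show ((m:ℚ)+1) = ((m+1 : ℕ):ℚ) by push_cast; ring, map_natCast]
  calc ((1:ℚ⟦X⟧) + X) * (((m+1:ℕ):ℚ⟦X⟧) * (log1p ^ m * d⁄dX ℚ log1p))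
      = ((m+1:ℕ):ℚ⟦X⟧) * log1p ^ m * ((1 + X) * d⁄dX ℚ log1p) := by ring
    _ = ((m+1:ℕ):ℚ⟦X⟧) * log1p ^ m := by rw [hUDyL, mul_one]

lemma rec' (q m : ℕ) :
    ((q:ℚ)+1) * coeff (q+1) (log1p ^ (m+1)) + (q:ℚ) * coeff q (log1p ^ (m+1))
      = ((m:ℚ)+1) * coeff q (log1p ^ m) := by
  have h := congrArg (coeff q) (keyrec m)
  rw [add_mul, one_mul, map_add] at h
  rw [map_smul, smul_eq_mul, coeff_derivative] at h
  rcases q with _ | p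
  · simpa [mul_comm] using h
  · rw [coeff_succ_X_mul, coeff_derivative] at h
    push_cast at h ⊢
    linarith

noncomputable def eS (q : ℕ) : ℚ := ∑ i ∈ Icc 1 q, coeff q (log1p^(2*i)) / ((2*i).factorial : ℚ)
noncomputable def oS (q : ℕ) : ℚ := ∑ i ∈ Icc 1 q, coeff q (log1p^(2*i-1)) / ((2*i-1).factorial : ℚ)

lemma sum_Icc_shrink {N M : ℕ} (hMN : M ≤ N) (g : ℕ → ℚ)
    (h0 : ∀ i, M < i → i ≤ N → g i = 0) :
    ∑ i ∈ Icc 1 N, g i = ∑ i ∈ Icc 1 M, g i := by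
  refine (Finset.sum_subset (Finset.Icc_subset_Icc le_rfl hMN) ?_).symm
  intro i hi hni
  simp only [Finset.mem_Icc] at hi hni
  exact h0 i (by omega) hi.2

lemma conv_Icc (f : ℕ → ℚ) (n : ℕ) : ∑ i ∈ Icc 1 n, f i = ∑ i ∈ range n, f (1+i) := by
  rw [← Finset.Ico_add_one_right_eq_Icc, Finset.sum_Ico_eq_sum_range]
  simp

lemma recE (q : ℕ) : ((q:ℚ)+1) * eS (q+1) = oS q - (q:ℚ) * eS q := by
  have step : ∀ i ∈ Icc 1 (q+1),
      ((q:ℚ)+1) * (coeff (q+1) (log1p^(2*i)) / ((2*i).factorial : ℚ))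
      = coeff q (log1p^(2*i-1)) / ((2*i-1).factorial : ℚ)
        - (q:ℚ) * (coeff q (log1p^(2*i)) / ((2*i).factorial : ℚ)) := by
    intro i hi
    simp only [Finset.mem_Icc] at hi
    have h2i : 2*i = (2*i-1)+1 := by omega
    have hr := rec' q (2*i-1)
    rw [← h2i] at hr
    have hmq : ((2*i-1 : ℕ) : ℚ) + 1 = ((2*i : ℕ) : ℚ) := by
      rw [h2i]; push_cast; ring
    rw [hmq] at hr
    have key : ((q:ℚ)+1) * coeff (q+1) (log1p^(2*i))
        = ((2*i : ℕ):ℚ) * coeff q (log1p^(2*i-1)) - (q:ℚ) * coeff q (log1p^(2*i)) := by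
      linarith [hr]
    have hfac : ((2*i).factorial : ℚ) = ((2*i : ℕ):ℚ) * ((2*i-1).factorial : ℚ) := by
      rw [h2i, Nat.factorial_succ, ← h2i]; push_cast; ring
    have hfne : ((2*i-1).factorial : ℚ) ≠ 0 := Nat.cast_ne_zero.mpr (Nat.factorial_ne_zero _)
    have h2ne : ((2*i : ℕ) : ℚ) ≠ 0 := by
      simp only [ne_eq, Nat.cast_eq_zero]; omega
    rw [hfac, ← mul_div_assoc, key, sub_div, mul_div_mul_left _ _ h2ne, mul_div_assoc]
  rw [eS, Finset.mul_sum, Finset.sum_congr rfl step, Finset.sum_sub_distrib]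
  have s1 : ∑ i ∈ Icc 1 (q+1), coeff q (log1p^(2*i-1)) / ((2*i-1).factorial : ℚ) = oS q := by
    rw [oS]; apply sum_Icc_shrink (by omega)
    intro i h1 h2
    rw [ordL (by omega)]; simp
  have s2 : ∑ i ∈ Icc 1 (q+1), (q:ℚ) * (coeff q (log1p^(2*i)) / ((2*i).factorial : ℚ))
      = (q:ℚ) * eS q := by
    rw [eS, Finset.mul_sum]; apply sum_Icc_shrink (by omega)
    intro i h1 h2
    rw [ordL (by omega)]; simp
  rw [s1, s2]

lemma recO (q : ℕ) : ((q:ℚ)+1) * oS (q+1)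
    = eS q + (if q = 0 then 1 else 0) - (q:ℚ) * oS q := by
  have step : ∀ i ∈ Icc 1 (q+1),
      ((q:ℚ)+1) * (coeff (q+1) (log1p^(2*i-1)) / ((2*i-1).factorial : ℚ))
      = coeff q (log1p^(2*i-2)) / ((2*i-2).factorial : ℚ)
        - (q:ℚ) * (coeff q (log1p^(2*i-1)) / ((2*i-1).factorial : ℚ)) := by
    intro i hi
    simp only [Finset.mem_Icc] at hi
    have h2i : 2*i-1 = (2*i-2)+1 := by omega
    have hr := rec' q (2*i-2)
    rw [← h2i] at hr
    have hmq : ((2*i-2 : ℕ) : ℚ) + 1 = ((2*i-1 : ℕ) : ℚ) := by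
      rw [h2i]; push_cast; ring
    rw [hmq] at hr
    have key : ((q:ℚ)+1) * coeff (q+1) (log1p^(2*i-1))
        = ((2*i-1 : ℕ):ℚ) * coeff q (log1p^(2*i-2)) - (q:ℚ) * coeff q (log1p^(2*i-1)) := by
      linarith [hr]
    have hfac : ((2*i-1).factorial : ℚ) = ((2*i-1 : ℕ):ℚ) * ((2*i-2).factorial : ℚ) := by
      rw [h2i, Nat.factorial_succ, ← h2i]; push_cast; ring
    have hfne : ((2*i-2).factorial : ℚ) ≠ 0 := Nat.cast_ne_zero.mpr (Nat.factorial_ne_zero _)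
    have h2ne : ((2*i-1 : ℕ) : ℚ) ≠ 0 := by
      simp only [ne_eq, Nat.cast_eq_zero]; omega
    rw [hfac, ← mul_div_assoc, key, sub_div, mul_div_mul_left _ _ h2ne, mul_div_assoc]
  rw [oS, Finset.mul_sum, Finset.sum_congr rfl step, Finset.sum_sub_distrib]
  have s1 : ∑ i ∈ Icc 1 (q+1), coeff q (log1p^(2*i-2)) / ((2*i-2).factorial : ℚ)
      = eS q + (if q = 0 then 1 else 0) := by
    rw [conv_Icc, Finset.sum_range_succ']
    have t0 : coeff q (log1p^(2*(1+0)-2)) / (((2*(1+0)-2).factorial : ℚ))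
        = (if q = 0 then 1 else 0) := by
      simp [PowerSeries.coeff_one]
    have tcong : ∀ i ∈ range q, coeff q (log1p^(2*(1+(i+1))-2)) / (((2*(1+(i+1))-2).factorial : ℚ))
        = coeff q (log1p^(2*(1+i))) / (((2*(1+i)).factorial : ℚ)) := by
      intro i _
      have : 2*(1+(i+1))-2 = 2*(1+i) := by omega
      rw [this]
    rw [Finset.sum_congr rfl tcong, t0, eS, conv_Icc]
  have s2 : ∑ i ∈ Icc 1 (q+1), (q:ℚ) * (coeff q (log1p^(2*i-1)) / ((2*i-1).factorial : ℚ))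
      = (q:ℚ) * oS q := by
    rw [oS, Finset.mul_sum]; apply sum_Icc_shrink (by omega)
    intro i h1 h2
    rw [ordL (by omega)]; simp
  rw [s1, s2]

lemma eo_closed (q : ℕ) : eS q = (if q ≤ 1 then 0 else (-1:ℚ)^q/2) ∧
    oS q = (if q = 0 then 0 else if q = 1 then 1 else (-1:ℚ)^(q-1)/2) := by
  induction q with
  | zero => constructor <;> simp [eS, oS]
  | succ p ih =>
    have hE := recE p
    have hO := recO p
    rw [ih.1, ih.2] at hE hO
    have hp1 : ((p:ℚ)+1) ≠ 0 := by positivity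
    constructor
    · apply mul_left_cancel₀ hp1
      rw [hE]
      rcases p with _ | _ | r
      · norm_num
      · norm_num
      · have h1 : ¬ (r+2 ≤ 1) := by omega
        have h2 : ¬ (r+2+1 ≤ 1) := by omega
        have h3 : (r+2:ℕ) ≠ 0 := by omega
        have h4 : (r+2:ℕ) ≠ 1 := by omega
        simp only [if_neg h1, if_neg h2, if_neg h3, if_neg h4]
        have h5 : (r+2) - 1 = r+1 := by omega
        rw [h5]
        push_cast
        rw [show r+2+1 = (r+1)+1+1 by omega]
        rw [pow_succ ((-1:ℚ)) (r+1), pow_succ ((-1:ℚ)) ((r+1)+1)]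
        ring
    · apply mul_left_cancel₀ hp1
      rw [hO]
      rcases p with _ | _ | r
      · norm_num [oS, eS]
      · norm_num
      · have h1 : ¬ (r+2 ≤ 1) := by omega
        have h3 : (r+2:ℕ) ≠ 0 := by omega
        have h4 : (r+2:ℕ) ≠ 1 := by omega
        have h3' : (r+2+1:ℕ) ≠ 0 := by omega
        have h4' : (r+2+1:ℕ) ≠ 1 := by omega
        simp only [if_neg h1, if_neg h3, if_neg h4, if_neg h3', if_neg h4']
        have h5 : (r+2) - 1 = r+1 := by omega
        have h6 : (r+2+1) - 1 = r+2 := by omega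
        rw [h5, h6]
        push_cast
        rw [show r+2 = (r+1)+1 by omega, pow_succ ((-1:ℚ)) (r+1)]
        ring
    
lemma eS_coeff (q : ℕ) : eS q = coeff q ((X:ℚ⟦X⟧)^2 * Vser) / 2 := by
  rw [(eo_closed q).1, coeff_X_pow_mul']
  rcases q with _ | _ | r
  · norm_num
  · norm_num
  · have h2 : 2 ≤ r+1+1 := by omega
    rw [if_pos h2, if_neg (by omega : ¬ (r+2 ≤ 1)), coeff_Vser]
    have : r+1+1-2 = r := by omega
    rw [this, pow_succ, pow_succ]
    ring

lemma oS_coeff (q : ℕ) : oS q = coeff q ((X:ℚ⟦X⟧) * (1 + Vser)) / 2 := by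
  rw [(eo_closed q).2]
  rcases q with _ | _ | r
  · simp [coeff_mul]
  · rw [coeff_succ_X_mul]
    simp [Vser, PowerSeries.coeff_one]
  · rw [coeff_succ_X_mul, map_add, coeff_Vser, PowerSeries.coeff_one,
      if_neg (by omega : ¬ (r+1 = 0)), if_neg (by omega : ¬ (r+2 = 0)),
      if_neg (by omega : ¬ (r+2 = 1))]
    have : r+2-1 = r+1 := by omega
    rw [this]
    ring

lemma e2S (b : ℕ) : ∑ i ∈ Icc 1 b, coeff b (log1p^(2*i)) / ((2*i-1).factorial : ℚ)
    = coeff b (log1p * ((X:ℚ⟦X⟧) * (1+Vser))) / 2 := by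
  have hstep : ∀ i ∈ Icc 1 b, coeff b (log1p^(2*i)) / ((2*i-1).factorial : ℚ)
      = ∑ uv ∈ Finset.HasAntidiagonal.antidiagonal b,
          coeff uv.1 log1p * (coeff uv.2 (log1p^(2*i-1)) / ((2*i-1).factorial : ℚ)) := by
    intro i hi
    simp only [Finset.mem_Icc] at hi
    have hpw : log1p ^ (2*i) = log1p * log1p^(2*i-1) := by
      conv_lhs => rw [show 2*i = 1 + (2*i-1) by omega]
      rw [pow_add, pow_one]
    rw [hpw, coeff_mul, Finset.sum_div]
    exact Finset.sum_congr rfl fun uv _ => by ring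
  rw [Finset.sum_congr rfl hstep, Finset.sum_comm]
  have inner : ∀ uv ∈ Finset.HasAntidiagonal.antidiagonal b,
      ∑ i ∈ Icc 1 b, coeff uv.1 log1p * (coeff uv.2 (log1p^(2*i-1)) / ((2*i-1).factorial : ℚ))
      = coeff uv.1 log1p * (coeff uv.2 ((X:ℚ⟦X⟧) * (1+Vser)) / 2) := by
    intro uv huv
    have hvb : uv.2 ≤ b := by
      rw [Finset.HasAntidiagonal.mem_antidiagonal] at huv; omega
    rw [← Finset.mul_sum]
    congr 1
    have : ∑ i ∈ Icc 1 b, coeff uv.2 (log1p^(2*i-1)) / ((2*i-1).factorial : ℚ) = oS uv.2 := by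
      rw [oS]
      apply sum_Icc_shrink hvb
      intro i h1 h2
      rw [ordL (by omega)]; simp
    rw [this, oS_coeff]
  rw [Finset.sum_congr rfl inner, coeff_mul]
  rw [Finset.sum_div]
  exact Finset.sum_congr rfl fun uv _ => by ring

lemma EvCombo (j b : ℕ) :
    ∑ i ∈ Icc 1 b, (2*(i:ℚ) - (2*(j:ℚ)+1)) * (coeff b (log1p^(2*i)) / ((2*i).factorial : ℚ))
    = coeff b (log1p * ((X:ℚ⟦X⟧) * (1+Vser)) - (2*(j:ℚ)+1) • ((X:ℚ⟦X⟧)^2*Vser)) / 2 := by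
  have hsplit : ∀ i ∈ Icc 1 b,
      (2*(i:ℚ) - (2*(j:ℚ)+1)) * (coeff b (log1p^(2*i)) / ((2*i).factorial : ℚ))
      = coeff b (log1p^(2*i)) / ((2*i-1).factorial : ℚ)
        - (2*(j:ℚ)+1) * (coeff b (log1p^(2*i)) / ((2*i).factorial : ℚ)) := by
    intro i hi
    simp only [Finset.mem_Icc] at hi
    have h2i : 2*i = (2*i-1)+1 := by omega
    have hfac : ((2*i).factorial : ℚ) = ((2*i : ℕ):ℚ) * ((2*i-1).factorial : ℚ) := by
      rw [h2i, Nat.factorial_succ, ← h2i]; push_cast; ring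
    have hfne : ((2*i-1).factorial : ℚ) ≠ 0 := Nat.cast_ne_zero.mpr (Nat.factorial_ne_zero _)
    have h2ne : ((2*i : ℕ) : ℚ) ≠ 0 := by
      simp only [ne_eq, Nat.cast_eq_zero]; omega
    have hc : (2*(i:ℚ)) = ((2*i : ℕ):ℚ) := by push_cast; ring
    rw [sub_mul, hfac, hc]
    congr 1
    rw [← mul_div_assoc, mul_div_mul_left _ _ h2ne]
  rw [Finset.sum_congr rfl hsplit, Finset.sum_sub_distrib, e2S, ← Finset.mul_sum]
  have : ∑ i ∈ Icc 1 b, coeff b (log1p^(2*i)) / ((2*i).factorial : ℚ) = eS b := rfl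
  rw [this, eS_coeff, map_sub, map_smul]
  field_simp
  rw [smul_eq_mul]

noncomputable def Qser (j : ℕ) : PowerSeries ℚ :=
  ((2*(((2*j).factorial):ℚ))⁻¹) •
    (log1p^(2*j) * (log1p * ((X:ℚ⟦X⟧) * (1+Vser)) - (2*(j:ℚ)+1) • ((X:ℚ⟦X⟧)^2*Vser)))

lemma X_dvd_R (j : ℕ) : (X:ℚ⟦X⟧)^(2*j+1) ∣
    log1p^(2*j) * (log1p * ((X:ℚ⟦X⟧) * (1+Vser)) - (2*(j:ℚ)+1) • ((X:ℚ⟦X⟧)^2*Vser)) := by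
  rw [pow_succ]
  apply mul_dvd_mul (pow_dvd_pow_of_dvd X_dvd_L (2*j))
  apply dvd_sub
  · exact X_dvd_L.mul_right _
  · rw [smul_eq_C_mul]
    apply Dvd.dvd.mul_left
    exact Dvd.dvd.mul_right (dvd_pow_self X (by norm_num)) _
lemma ordQ {j b : ℕ} (hb : b ≤ 2*j) : coeff b (Qser j) = 0 := by
  rw [Qser, map_smul]
  rw [PowerSeries.X_pow_dvd_iff.mp (X_dvd_R j) b (by omega)]
  simp

lemma ordBL {x : ℚ} {u m : ℕ} (hu : u < m) : coeff u (binomSeries x * log1p^m) = 0 := by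
  have : (X:ℚ⟦X⟧)^m ∣ binomSeries x * log1p^m :=
    Dvd.dvd.mul_left (pow_dvd_pow_of_dvd X_dvd_L m) _
  exact PowerSeries.X_pow_dvd_iff.mp this u hu

lemma SUMQ0 (x : ℚ) (j q : ℕ) :
    ∑ h ∈ Icc (j+1) q,
      (2*(h:ℚ) - 4*((j:ℚ)+1) + 3) * ((2*h).choose (2*j) : ℚ) * coeff q (Aser (2*h) x)
    = coeff q (binomSeries x * Qser j) := by
  by_cases hqj : q ≤ j
  · rw [Finset.Icc_eq_empty (by omega), Finset.sum_empty, coeff_mul]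
    refine (Finset.sum_eq_zero fun uv huv => ?_).symm
    rw [Finset.HasAntidiagonal.mem_antidiagonal] at huv
    rw [ordQ (by omega : uv.2 ≤ 2*j), mul_zero]
  -- q ≥ j+1
  push_neg at hqj
  have hreidx : ∑ h ∈ Icc (j+1) q,
      (2*(h:ℚ) - 4*((j:ℚ)+1) + 3) * ((2*h).choose (2*j) : ℚ) * coeff q (Aser (2*h) x)
      = ∑ i ∈ Icc 1 (q-j),
        (2*((i+j:ℕ):ℚ) - 4*((j:ℚ)+1) + 3) * ((2*(i+j)).choose (2*j) : ℚ)
          * coeff q (Aser (2*(i+j)) x) := by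
    rw [show Icc (j+1) q = (Icc 1 (q-j)).map (addRightEmbedding j) by
      rw [Finset.map_add_right_Icc]; congr 1 <;> omega, Finset.sum_map]
    simp only [addRightEmbedding_apply]
  rw [hreidx]
  -- per-term rewrite
  have hterm : ∀ i ∈ Icc 1 (q-j),
      (2*((i+j:ℕ):ℚ) - 4*((j:ℚ)+1) + 3) * ((2*(i+j)).choose (2*j) : ℚ)
          * coeff q (Aser (2*(i+j)) x)
      = ((2*j).factorial : ℚ)⁻¹ * ∑ uv ∈ Finset.HasAntidiagonal.antidiagonal q,
          coeff uv.1 (binomSeries x * log1p^(2*j)) *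
            ((2*(i:ℚ) - (2*(j:ℚ)+1)) * (coeff uv.2 (log1p^(2*i)) / ((2*i).factorial : ℚ))) := by
    intro i hi
    simp only [Finset.mem_Icc] at hi
    have hsc : (2*((i+j:ℕ):ℚ) - 4*((j:ℚ)+1) + 3) = (2*(i:ℚ) - (2*(j:ℚ)+1)) := by
      push_cast; ring
    have hch : ((2*(i+j)).choose (2*j) : ℚ)
        = ((2*(i+j)).factorial : ℚ) / (((2*j).factorial : ℚ) * ((2*i).factorial : ℚ)) := by
      have h1 : (2*(i+j)).choose (2*j) * (2*j).factorial * (2*(i+j) - 2*j).factorial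
          = (2*(i+j)).factorial := Nat.choose_mul_factorial_mul_factorial (by omega)
      have h2 : 2*(i+j) - 2*j = 2*i := by omega
      rw [h2] at h1
      have := congrArg (fun m : ℕ => (m : ℚ)) h1
      push_cast at this
      field_simp
      linarith [this]
    have hA : coeff q (Aser (2*(i+j)) x)
        = ((2*(i+j)).factorial : ℚ)⁻¹ * coeff q (binomSeries x * log1p^(2*j) * log1p^(2*i)) := by
      rw [Aser, map_smul, smul_eq_mul]
      congr 2
      rw [mul_assoc, ← pow_add]
      congr 2
      omega
    rw [hsc, hch, hA, coeff_mul, Finset.mul_sum]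
    have hfne : ((2*(i+j)).factorial : ℚ) ≠ 0 := Nat.cast_ne_zero.mpr (Nat.factorial_ne_zero _)
    have hfne1 : (((2*j).factorial) : ℚ) ≠ 0 := Nat.cast_ne_zero.mpr (Nat.factorial_ne_zero _)
    have hfne2 : (((2*i).factorial) : ℚ) ≠ 0 := Nat.cast_ne_zero.mpr (Nat.factorial_ne_zero _)
    rw [Finset.mul_sum, Finset.mul_sum]
    apply Finset.sum_congr rfl
    intro uv _
    field_simp
  rw [Finset.sum_congr rfl hterm, ← Finset.mul_sum, Finset.sum_comm]
  -- inner sum per uv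
  have hinner : ∀ uv ∈ Finset.HasAntidiagonal.antidiagonal q,
      ∑ i ∈ Icc 1 (q-j),
        coeff uv.1 (binomSeries x * log1p^(2*j)) *
          ((2*(i:ℚ) - (2*(j:ℚ)+1)) * (coeff uv.2 (log1p^(2*i)) / ((2*i).factorial : ℚ)))
      = coeff uv.1 (binomSeries x * log1p^(2*j)) *
          (coeff uv.2 (log1p * ((X:ℚ⟦X⟧) * (1+Vser)) - (2*(j:ℚ)+1) • ((X:ℚ⟦X⟧)^2*Vser)) / 2) := by
    intro uv huv
    rw [Finset.HasAntidiagonal.mem_antidiagonal] at huv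
    rw [← Finset.mul_sum]
    by_cases hv : uv.2 ≤ q - j
    · congr 1
      have hshr : ∑ i ∈ Icc 1 (q-j),
          (2*(i:ℚ) - (2*(j:ℚ)+1)) * (coeff uv.2 (log1p^(2*i)) / ((2*i).factorial : ℚ))
          = ∑ i ∈ Icc 1 uv.2,
          (2*(i:ℚ) - (2*(j:ℚ)+1)) * (coeff uv.2 (log1p^(2*i)) / ((2*i).factorial : ℚ)) := by
        apply sum_Icc_shrink hv
        intro i h1 h2
        rw [ordL (by omega)]
        simp
      rw [hshr, EvCombo]
    · have hu : uv.1 < 2*j := by omega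
      rw [ordBL hu, zero_mul, zero_mul]
  rw [Finset.sum_congr rfl hinner]
  -- reassemble
  rw [show binomSeries x * Qser j
      = ((2*(((2*j).factorial):ℚ))⁻¹) • ((binomSeries x * log1p^(2*j)) *
          (log1p * ((X:ℚ⟦X⟧) * (1+Vser)) - (2*(j:ℚ)+1) • ((X:ℚ⟦X⟧)^2*Vser))) by
    rw [Qser, mul_smul_comm]; ring_nf]
  rw [map_smul, smul_eq_mul, coeff_mul, Finset.mul_sum, Finset.mul_sum]
  apply Finset.sum_congr rfl
  intro uv _
  rw [mul_inv, div_eq_mul_inv]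
  ring

lemma hUB (x : ℚ) : (1+X:ℚ⟦X⟧) * binomSeries (x-1) = binomSeries x := by
  have h := hBU (x-1)
  rw [sub_add_cancel] at h
  rw [mul_comm]; exact h

lemma hDA (x : ℚ) (m : ℕ) : (1+X:ℚ⟦X⟧) * d⁄dX ℚ (binomSeries x * log1p^(m+1))
    = PowerSeries.C x * (binomSeries x * log1p^(m+1))
      + PowerSeries.C ((m:ℚ)+1) * (binomSeries x * log1p^m) := by
  rw [Derivation.leibniz, smul_eq_mul, smul_eq_mul, hDB]
  have h1 := keyrec m
  rw [smul_eq_C_mul] at h1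
  linear_combination binomSeries x * h1 + PowerSeries.C x * log1p^(m+1) * hUB x

noncomputable def Q'ser (j : ℕ) : PowerSeries ℚ :=
  ((2*(((2*j).factorial):ℚ))⁻¹) •
    (log1p^(2*j) * (log1p * (1+Vser) - (2*(j:ℚ)+1) • ((X:ℚ⟦X⟧)*Vser)))

lemma hXQ (j : ℕ) : Qser j = X * Q'ser j := by
  rw [Qser, Q'ser, mul_smul_comm]
  congr 1
  rw [smul_eq_C_mul, smul_eq_C_mul]
  ring

lemma hmkS (x : ℚ) (j : ℕ) :
    (PowerSeries.mk fun n => ∑ h ∈ Finset.Icc (j+1) (n + 1),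
        ((2 * (h : ℚ) - 4 * ((j+1 : ℕ) : ℚ) + 3) *
            (if 1 ≤ j+1 then ((2 * h).choose (2 * (j+1) - 2) : ℚ) else 0)) *
          PowerSeries.coeff (n + 1) (Aser (2 * h) x))
    = binomSeries x * Q'ser j := by
  ext n
  rw [coeff_mk]
  have hsum : ∑ h ∈ Finset.Icc (j+1) (n + 1),
      ((2 * (h : ℚ) - 4 * ((j+1 : ℕ) : ℚ) + 3) *
          (if 1 ≤ j+1 then ((2 * h).choose (2 * (j+1) - 2) : ℚ) else 0)) *
        PowerSeries.coeff (n + 1) (Aser (2 * h) x)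
      = ∑ h ∈ Finset.Icc (j+1) (n+1),
        (2*(h:ℚ) - 4*((j:ℚ)+1) + 3) * ((2*h).choose (2*j) : ℚ) * coeff (n+1) (Aser (2*h) x) := by
    apply Finset.sum_congr rfl
    intro h _
    rw [if_pos (by omega), show 2*(j+1)-2 = 2*j by omega]
    push_cast
    ring
  rw [hsum, SUMQ0 x j (n+1)]
  have : binomSeries x * Qser j = X * (binomSeries x * Q'ser j) := by
    rw [hXQ]; ring
  rw [this, coeff_succ_X_mul]

lemma hU2Q (j : ℕ) : ((1+X:ℚ⟦X⟧))^2 * Q'ser j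
    = ((2*(((2*j).factorial):ℚ))⁻¹) •
      (log1p^(2*j) * (log1p * ((1+X)^2+(1+X)) - (2*(j:ℚ)+1) • ((X:ℚ⟦X⟧)*(1+X)))) := by
  rw [Q'ser, smul_eq_C_mul, smul_eq_C_mul, smul_eq_C_mul, smul_eq_C_mul]
  linear_combination (PowerSeries.C ((2*(((2*j).factorial):ℚ))⁻¹) * log1p^(2*j) *
    ((1+X) * log1p - PowerSeries.C (2*(j:ℚ)+1) * (X * (1+X)))) * hUV

lemma dCmul (a : ℚ) (f : ℚ⟦X⟧) : d⁄dX ℚ (PowerSeries.C a * f) = PowerSeries.C a * d⁄dX ℚ f := by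
  rw [Derivation.leibniz, smul_eq_mul, smul_eq_mul, derivative_C]
  ring

lemma hu_ne : ((1 + X : ℚ⟦X⟧)) ≠ 0 := by
  intro h
  have := congrArg (PowerSeries.constantCoeff) h
  simp at this

lemma dU : d⁄dX ℚ ((1:ℚ⟦X⟧) + X) = 1 := by
  rw [map_add, derivative_X]
  simp


/-- the formal power series identity
`-(x²+x)A_{2k,x} - y²A''_{2k,x} + 2xyA'_{2k,x} + (x²-x)A_{2k,x-1}
  = yA''_{2k,x} - 2A'_{2k,x} + (2/(2k-1)) Σ_{h≥k} (2h-4k+3) C(2h,2k-2) A_{2h,x}/y`.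
The series `Σ_{h≥k} ⋯ A_{2h,x}/y` is encoded coefficientwise (its `y^n`-coefficient is a finite
sum since `A_{2h,x}` has order `2h`); for `k = 0` the binomial `C(2h, 2k-2) = C(2h,-2)` is `0`. -/
theorem stmt2 (k : ℕ) (x : ℚ) :
    -((x ^ 2 + x) • Aser (2 * k) x) - PowerSeries.X ^ 2 * Dy (Dy (Aser (2 * k) x))
        + (2 * x) • (PowerSeries.X * Dy (Aser (2 * k) x)) + (x ^ 2 - x) • Aser (2 * k) (x - 1) =
      PowerSeries.X * Dy (Dy (Aser (2 * k) x)) - (2 : ℚ) • Dy (Aser (2 * k) x)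
        + (2 / (2 * (k : ℚ) - 1)) • (PowerSeries.mk fun n =>
            ∑ h ∈ Finset.Icc k (n + 1),
              ((2 * (h : ℚ) - 4 * (k : ℚ) + 3) *
                  (if 1 ≤ k then ((2 * h).choose (2 * k - 2) : ℚ) else 0)) *
                PowerSeries.coeff (n + 1) (Aser (2 * h) x)) := by
  simp only [Dy_eq]
  obtain _ | j := k
  · -- k = 0
    have hmk0 : (PowerSeries.mk fun n =>
        ∑ h ∈ Finset.Icc 0 (n + 1),
          ((2 * (h : ℚ) - 4 * ((0:ℕ) : ℚ) + 3) *
              (if 1 ≤ 0 then ((2 * h).choose (2 * 0 - 2) : ℚ) else 0)) *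
            PowerSeries.coeff (n + 1) (Aser (2 * h) x)) = 0 := by
      ext n
      rw [coeff_mk]
      simp
    rw [hmk0, smul_zero, add_zero]
    simp only [Nat.mul_zero]
    have hA0 : ∀ y : ℚ, Aser 0 y = binomSeries y := by
      intro y; simp [Aser]
    rw [hA0 x, hA0 (x-1)]
    refine mul_left_cancel₀ (pow_ne_zero 2 hu_ne) ?_
    simp only [smul_eq_C_mul]
    have hd1 := hDB x
    have hd2 := hDB (x-1)
    have hub1 := hUB x
    have hub2 := hUB (x-1)
    have hdd : d⁄dX ℚ (d⁄dX ℚ (binomSeries x))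
        = PowerSeries.C x * (PowerSeries.C (x-1) * binomSeries (x-1-1)) := by
      rw [hd1, dCmul, hd2]
    simp only [map_add, map_mul, map_sub, map_pow, map_one, map_ofNat] at *
    linear_combination (-(1+X:ℚ⟦X⟧)^2*(X^2+X))*hdd
      + ((2*PowerSeries.C x*X + 2*(1:ℚ⟦X⟧))*(1+X)^2)*hd1
      + (-(1+X:ℚ⟦X⟧)^2*X*(PowerSeries.C x * (PowerSeries.C x - 1)))*hub2
      + ((1+X:ℚ⟦X⟧)^2*(PowerSeries.C x^2 + PowerSeries.C x))*hub1
  · -- k = j+1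
    set c : ℚ := ((2*(j+1)).factorial : ℚ) with hc
    have hcne : c ≠ 0 := Nat.cast_ne_zero.mpr (Nat.factorial_ne_zero _)
    have hdne : (((2*j).factorial : ℚ)) ≠ 0 := Nat.cast_ne_zero.mpr (Nat.factorial_ne_zero _)
    rw [hmkS x j]
    refine mul_left_cancel₀ (pow_ne_zero 2 hu_ne) ?_
    simp only [smul_eq_C_mul]
    -- basic closed forms
    have h1 : Aser (2*(j+1)) x = PowerSeries.C c⁻¹ * (binomSeries x * log1p^(2*(j+1))) := by
      rw [Aser, smul_eq_C_mul, hc]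
    have h4 : (1+X:ℚ⟦X⟧) * Aser (2*(j+1)) (x-1)
        = PowerSeries.C c⁻¹ * (binomSeries x * log1p^(2*(j+1))) := by
      rw [Aser, smul_eq_C_mul, hc]
      linear_combination (PowerSeries.C (((2 * (j + 1)).factorial:ℚ))⁻¹ * log1p^(2*(j+1))) * hUB x
    have hAder : d⁄dX ℚ (Aser (2*(j+1)) x)
        = PowerSeries.C c⁻¹ * d⁄dX ℚ (binomSeries x * log1p^(2*(j+1))) := by
      rw [Aser, Derivation.map_smul, smul_eq_C_mul, hc]
    have hD1 : (1+X:ℚ⟦X⟧) * d⁄dX ℚ (binomSeries x * log1p^(2*(j+1)))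
        = PowerSeries.C x * (binomSeries x * log1p^(2*(j+1)))
          + PowerSeries.C (2*(j:ℚ)+2) * (binomSeries x * log1p^(2*j+1)) := by
      have e1 : 2*(j+1) = (2*j+1)+1 := by omega
      rw [e1]
      have h := hDA x (2*j+1)
      have e2 : ((2*j+1 : ℕ):ℚ)+1 = 2*(j:ℚ)+2 := by push_cast; ring
      rw [e2] at h
      exact h
    have hD2 : (1+X:ℚ⟦X⟧) * d⁄dX ℚ (binomSeries x * log1p^(2*j+1))
        = PowerSeries.C x * (binomSeries x * log1p^(2*j+1))
          + PowerSeries.C (2*(j:ℚ)+1) * (binomSeries x * log1p^(2*j)) := by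
      have h := hDA x (2*j)
      have e2 : ((2*j : ℕ):ℚ)+1 = 2*(j:ℚ)+1 := by push_cast; ring
      rw [e2] at h
      exact h
    have hd1 : (1+X:ℚ⟦X⟧) * d⁄dX ℚ (Aser (2*(j+1)) x)
        = PowerSeries.C c⁻¹ * (PowerSeries.C x * (binomSeries x * log1p^(2*(j+1)))
          + PowerSeries.C (2*(j:ℚ)+2) * (binomSeries x * log1p^(2*j+1))) := by
      rw [hAder]
      linear_combination PowerSeries.C c⁻¹ * hD1
    -- second derivative
    have hx2 : d⁄dX ℚ ((1+X:ℚ⟦X⟧) * d⁄dX ℚ (Aser (2*(j+1)) x))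
        = d⁄dX ℚ (Aser (2*(j+1)) x) + (1+X) * d⁄dX ℚ (d⁄dX ℚ (Aser (2*(j+1)) x)) := by
      rw [Derivation.leibniz, smul_eq_mul, smul_eq_mul, dU]
      ring
    have h5 := congrArg (d⁄dX ℚ) hd1
    rw [hx2, dCmul, map_add, dCmul, dCmul] at h5
    -- h5 : dF + u*ddF = C c⁻¹ * (C x * d(B L^K) + C (2j+2) * d(B L^{2j+1}))
    have hdd : (1+X:ℚ⟦X⟧)^2 * d⁄dX ℚ (d⁄dX ℚ (Aser (2*(j+1)) x))
        = PowerSeries.C c⁻¹ *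
          (PowerSeries.C x * (PowerSeries.C x * (binomSeries x * log1p^(2*(j+1)))
              + PowerSeries.C (2*(j:ℚ)+2) * (binomSeries x * log1p^(2*j+1)))
           + PowerSeries.C (2*(j:ℚ)+2) * (PowerSeries.C x * (binomSeries x * log1p^(2*j+1))
              + PowerSeries.C (2*(j:ℚ)+1) * (binomSeries x * log1p^(2*j)))
           - (PowerSeries.C x * (binomSeries x * log1p^(2*(j+1)))
              + PowerSeries.C (2*(j:ℚ)+2) * (binomSeries x * log1p^(2*j+1)))) := by
      linear_combination (1+X:ℚ⟦X⟧) * h5 - hd1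
        + PowerSeries.C c⁻¹ * PowerSeries.C x * hD1
        + PowerSeries.C c⁻¹ * PowerSeries.C (2*(j:ℚ)+2) * hD2
    -- sum term
    have hscq : (2 / (2 * (((j+1):ℕ) : ℚ) - 1)) * (2*(((2*j).factorial):ℚ))⁻¹
        = (2*(j:ℚ)+2) * c⁻¹ := by
      have hfac : c = (2*(j:ℚ)+2)*(2*(j:ℚ)+1)*((2*j).factorial : ℚ) := by
        rw [hc, show 2*(j+1) = (2*j+1)+1 by omega, Nat.factorial_succ, Nat.factorial_succ]
        push_cast
        ring
      have h1ne : (2*(j:ℚ)+1) ≠ 0 := by positivity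
      have h2ne : (2*(j:ℚ)+2) ≠ 0 := by positivity
      have h2j1 : (2*((j+1:ℕ):ℚ) - 1) = 2*(j:ℚ)+1 := by push_cast; ring
      have n1 : (2*(j:ℚ)+1) * (2*((2*j).factorial:ℚ)) ≠ 0 :=
        mul_ne_zero h1ne (mul_ne_zero two_ne_zero hdne)
      have n2 : (2*(j:ℚ)+2)*(2*(j:ℚ)+1)*((2*j).factorial:ℚ) ≠ 0 :=
        mul_ne_zero (mul_ne_zero h2ne h1ne) hdne
      rw [h2j1, hfac, div_eq_mul_inv, mul_assoc, ← mul_inv, ← div_eq_mul_inv, ← div_eq_mul_inv,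
        div_eq_div_iff n1 n2]
      ring
    have hscC : PowerSeries.C (2 / (2 * (((j+1):ℕ) : ℚ) - 1))
          * PowerSeries.C (2*(((2*j).factorial):ℚ))⁻¹
        = PowerSeries.C (2*(j:ℚ)+2) * PowerSeries.C c⁻¹ := by
      rw [← map_mul, ← map_mul, hscq]
    have hst : (1+X:ℚ⟦X⟧)^2 * (PowerSeries.C (2 / (2 * (((j+1):ℕ) : ℚ) - 1))
          * (binomSeries x * Q'ser j))
        = PowerSeries.C c⁻¹ *
          (PowerSeries.C (2*(j:ℚ)+2) * (binomSeries x * (log1p^(2*j) * (log1p * ((1+X)^2+(1+X)))))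
           - PowerSeries.C ((2*(j:ℚ)+2)*(2*(j:ℚ)+1)) * (binomSeries x * (log1p^(2*j) * (X*(1+X))))) := by
      have hq := hU2Q j
      rw [smul_eq_C_mul, smul_eq_C_mul] at hq
      linear_combination (PowerSeries.C (2 / (2 * (((j+1):ℕ) : ℚ) - 1)) * binomSeries x) * hq
        + (binomSeries x * (log1p^(2*j) * (log1p * ((1+X)^2+(1+X))
            - PowerSeries.C (2*(j:ℚ)+1) * (X*(1+X))))) * hscC
        + (PowerSeries.C c⁻¹
            * (binomSeries x * (log1p^(2*j) * (X*(1+X))))) * (map_mul (PowerSeries.C) (2*(j:ℚ)+2) (2*(j:ℚ)+1))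
    -- final assembly
    simp only [map_add, map_mul, map_sub, map_pow, map_one, map_ofNat] at *
    linear_combination (-(PowerSeries.C x^2 + PowerSeries.C x)*(1+X:ℚ⟦X⟧)^2) * h1
      + (-(X:ℚ⟦X⟧)^2 - X) * hdd
      + (2*PowerSeries.C x*X*(1+X:ℚ⟦X⟧) + 2*(1+X:ℚ⟦X⟧)) * hd1
      + ((PowerSeries.C x^2 - PowerSeries.C x)*(1+X:ℚ⟦X⟧)) * h4
      - hst
end

section
/- Let R be a square matrix over ℂ with graded components (R^j)_t (i.e., (·)_t extracts degree-t parts compatible with conjugation by z^μ), and define the matrix-valued formal power series A_{x,k,t}(y) := Σ_{m=-1}^∞ Σ_{k₁=k}^{m+1} C(k₁,k)·Σ_{k₂≥k₁} ((-1)^{k₂-k₁}/k₂!)·[k₂ choose k₁]·C(x, m+1-k₂)·(R^{k₁-k})_t·y^{m+1}. Then A_{x,k,t}(y) = (1/k!)·(1+y)^x·log^k(1+y)·((1+y)^R)_t, where ((1+y)^R)_t := Σ_β (1/β!)·log^β(1+y)·(R^β)_t. -/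
open Finset

/-- Degree-`r` graded component of a matrix w.r.t. the grading induced by `z^μ`-conjugation. -/
def gradePart {l : ℕ} (μ : Fin l → ℤ) (P : Matrix (Fin l) (Fin l) ℚ) (r : ℕ) :
    Matrix (Fin l) (Fin l) ℚ :=
  Matrix.of fun α β => if μ α - μ β = (r : ℤ) then P α β else 0

open PowerSeries

lemma stirling1_eq_zero : ∀ {n j : ℕ}, n < j → stirling1 n j = 0 := by
  intro n
  induction n with
  | zero => intro j hj; match j, hj with | j+1, _ => rfl
  | succ n ih =>
    intro j hj
    match j, hj with
    | j+1, hj =>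
      show n * stirling1 n (j+1) + stirling1 n j = 0
      rw [ih (by omega), ih (by omega)]
      simp

lemma stirling1_zero_right (n : ℕ) : stirling1 n 0 = if n = 0 then 1 else 0 := by
  induction n with
  | zero => rfl
  | succ n ih =>
    show n * stirling1 n 0 = _
    rcases Nat.eq_zero_or_pos n with h | h
    · simp [h]
    · simp [ih, Nat.pos_iff_ne_zero.mp h]

lemma coeff_dlog (n : ℕ) : coeff n (d⁄dX ℚ log1p) = (-1 : ℚ)^n := by
  rw [coeff_derivative, log1p, coeff_mk]
  have : ((n:ℚ)+1) ≠ 0 := by positivity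
  field_simp [pow_succ]
  rw [if_neg (Nat.succ_ne_zero n)]
  push_cast
  rw [div_mul_cancel₀ _ this]
  ring

lemma onePlusX_mul_dlog : ((1 : ℚ⟦X⟧) + X) * (d⁄dX ℚ log1p) = 1 := by
  ext n
  rw [add_mul, one_mul, map_add]
  cases n with
  | zero => simp [coeff_dlog, coeff_zero_eq_constantCoeff]
  | succ n =>
    rw [coeff_succ_X_mul, coeff_dlog, coeff_dlog]
    rw [pow_succ]
    simp [coeff_one]

lemma rec1 (j n : ℕ) :
    ((n:ℚ)+1) * coeff (n+1) (log1p^(j+1)) + (n:ℚ) * coeff n (log1p^(j+1))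
      = ((j:ℚ)+1) * coeff n (log1p^j) := by
  have hA : ((1 : ℚ⟦X⟧) + X) * (d⁄dX ℚ (log1p ^ (j+1))) = (j+1) • (log1p ^ j) := by
    rw [Derivation.leibniz_pow]
    simp only [smul_eq_mul, Nat.add_sub_cancel, nsmul_eq_mul]
    push_cast
    calc ((1:ℚ⟦X⟧) + X) * ((((j:ℚ⟦X⟧))+1) * (log1p ^ j * d⁄dX ℚ log1p))
        = ((j:ℚ⟦X⟧)+1) * (log1p ^ j * (((1:ℚ⟦X⟧) + X) * d⁄dX ℚ log1p)) := by push_cast; ring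
      _ = _ := by rw [onePlusX_mul_dlog, mul_one]
  have h := congrArg (coeff n) hA
  rw [add_mul, one_mul, map_add, map_nsmul] at h
  have hX : coeff n (X * d⁄dX ℚ (log1p ^ (j+1))) + coeff n (d⁄dX ℚ (log1p ^ (j+1)))
      = ((n:ℚ)+1) * coeff (n+1) (log1p^(j+1)) + (n:ℚ) * coeff n (log1p^(j+1)) := by
    cases n with
    | zero =>
      have h0 : coeff 0 (X * d⁄dX ℚ (log1p ^ (j+1))) = 0 := by
        simp [coeff_zero_eq_constantCoeff, map_mul]
      rw [h0, coeff_derivative]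
      push_cast
      ring
    | succ m =>
      rw [coeff_succ_X_mul, coeff_derivative, coeff_derivative]
      push_cast
      ring
  rw [add_comm (coeff n _), hX] at h
  rw [h, nsmul_eq_mul]
  push_cast
  ring

lemma coeff_log_pow : ∀ (j n : ℕ),
    coeff n (log1p ^ j) = (-1:ℚ)^(n+j) * j.factorial * stirling1 n j / n.factorial := by
  intro j
  induction j with
  | zero =>
    intro n
    rw [pow_zero, coeff_one, stirling1_zero_right]
    rcases Nat.eq_zero_or_pos n with h | h
    · simp [h]
    · simp [Nat.pos_iff_ne_zero.mp h]
  | succ j ih =>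
    intro n
    induction n with
    | zero =>
      rw [coeff_zero_eq_constantCoeff, map_pow]
      have : constantCoeff log1p = 0 := by
        rw [← coeff_zero_eq_constantCoeff, log1p, coeff_mk]; simp
      rw [this, zero_pow (Nat.succ_ne_zero j)]
      rw [stirling1_eq_zero (Nat.succ_pos j)]
      simp
    | succ n ihn =>
      have h := rec1 j n
      rw [ihn, ih n] at h
      have hs : (stirling1 (n+1) (j+1) : ℚ) = n * stirling1 n (j+1) + stirling1 n j := by
        push_cast [show stirling1 (n+1) (j+1) = n * stirling1 n (j+1) + stirling1 n j from rfl]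
        ring
      have hn : ((n:ℚ)+1) ≠ 0 := by positivity
      have hnf : ((n.factorial : ℚ)) ≠ 0 := Nat.cast_ne_zero.mpr n.factorial_ne_zero
      have hfs : ((n+1).factorial : ℚ) = ((n:ℚ)+1) * n.factorial := by
        push_cast [Nat.factorial_succ]; ring
      have hjf : (((j+1).factorial : ℚ)) = ((j:ℚ)+1) * j.factorial := by
        push_cast [Nat.factorial_succ]; ring
      rw [hfs, hjf, hs]
      rw [hjf] at h
      field_simp at h ⊢
      linear_combination h

lemma key_scalar (k β : ℕ) (x : ℚ) (N : ℕ) :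
    ∑ i ∈ range (N+1), ((k.factorial:ℚ)⁻¹ * coeff i (binomSeries x * log1p^k)) *
        ((β.factorial:ℚ)⁻¹ * coeff (N-i) (log1p^β))
      = ∑ k₂ ∈ range (N+1),
          ((k+β).choose k : ℚ) * ((-1:ℚ)^(k₂+(k+β)) * (stirling1 k₂ (k+β) : ℚ) / (k₂.factorial : ℚ))
            * myChoose x (N-k₂) := by
  have h1 : ∑ i ∈ range (N+1), coeff i (binomSeries x * log1p^k) * coeff (N-i) (log1p^β)
      = coeff N (binomSeries x * log1p^(k+β)) := by
    rw [show binomSeries x * log1p^(k+β) = (binomSeries x * log1p^k) * log1p^β by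
      rw [mul_assoc, pow_add]]
    rw [coeff_mul, Finset.Nat.sum_antidiagonal_eq_sum_range_succ_mk]
  have h2 : coeff N (binomSeries x * log1p^(k+β))
      = ∑ i ∈ range (N+1), myChoose x i * coeff (N-i) (log1p^(k+β)) := by
    rw [coeff_mul, Finset.Nat.sum_antidiagonal_eq_sum_range_succ_mk]
    exact Finset.sum_congr rfl fun i _ => by rw [binomSeries, coeff_mk]
  have h3 : ∑ i ∈ range (N+1), myChoose x i * coeff (N-i) (log1p^(k+β))
      = ∑ k₂ ∈ range (N+1), myChoose x (N-k₂) * coeff k₂ (log1p^(k+β)) := by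
    rw [← Finset.sum_range_reflect]
    apply Finset.sum_congr rfl
    intro i hi
    rw [Finset.mem_range] at hi
    have e1 : N + 1 - 1 - i = N - i := by omega
    rw [e1, Nat.sub_sub_self (by omega)]
  have hLHS : ∑ i ∈ range (N+1), ((k.factorial:ℚ)⁻¹ * coeff i (binomSeries x * log1p^k)) *
        ((β.factorial:ℚ)⁻¹ * coeff (N-i) (log1p^β))
      = (k.factorial:ℚ)⁻¹ * (β.factorial:ℚ)⁻¹ *
          ∑ i ∈ range (N+1), coeff i (binomSeries x * log1p^k) * coeff (N-i) (log1p^β) := by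
    rw [Finset.mul_sum]
    exact Finset.sum_congr rfl fun i _ => by ring
  rw [hLHS, h1, h2, h3, Finset.mul_sum]
  apply Finset.sum_congr rfl
  intro k₂ _
  rw [coeff_log_pow]
  have hcb : ((k+β).choose k : ℚ) * (k.factorial : ℚ) * (β.factorial : ℚ)
      = ((k+β).factorial : ℚ) := by
    have h := Nat.choose_mul_factorial_mul_factorial (Nat.le_add_right k β)
    rw [Nat.add_sub_cancel_left] at h
    exact_mod_cast congrArg (Nat.cast : ℕ → ℚ) h
  have hk : (k.factorial : ℚ) ≠ 0 := Nat.cast_ne_zero.mpr k.factorial_ne_zero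
  have hb : (β.factorial : ℚ) ≠ 0 := Nat.cast_ne_zero.mpr β.factorial_ne_zero
  have hk2 : (k₂.factorial : ℚ) ≠ 0 := Nat.cast_ne_zero.mpr k₂.factorial_ne_zero
  rw [← hcb]
  field_simp

lemma neg_one_pow_sub' {a b : ℕ} (h : b ≤ a) : (-1:ℚ)^(a-b) = (-1:ℚ)^(a+b) := by
  obtain ⟨c, rfl⟩ := Nat.exists_eq_add_of_le h
  rw [Nat.add_sub_cancel_left, show b + c + b = 2*b + c by ring, pow_add, pow_mul]
  simp

/-- the matrix-valued power series
`A_{x,k,t}(y) = Σ_{m≥-1} Σ_{k₁=k}^{m+1} C(k₁,k) Σ_{k₂≥k₁} ((-1)^{k₂-k₁}/k₂!) [k₂,k₁]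
  C(x,m+1-k₂) (R^{k₁-k})_t y^{m+1}`
equals `(1/k!)(1+y)^x log^k(1+y) ((1+y)^R)_t`, where
`((1+y)^R)_t = Σ_β (1/β!) log^β(1+y) (R^β)_t` (all sums encoded coefficientwise; the terms
with `k₂ > m+1` vanish since `C(x, negative) = 0`). -/
theorem stmt8 (l t : ℕ) (μ : Fin l → ℤ) (R : Matrix (Fin l) (Fin l) ℚ) (k : ℕ) (x : ℚ) :
    (PowerSeries.mk fun N => ∑ k₁ ∈ Finset.Icc k N, ∑ k₂ ∈ Finset.Icc k₁ N,
        ((k₁.choose k : ℚ) * ((-1 : ℚ) ^ (k₂ - k₁) / (k₂.factorial : ℚ)) *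
            (stirling1 k₂ k₁ : ℚ) * myChoose x (N - k₂)) • gradePart μ (R ^ (k₁ - k)) t) =
      PowerSeries.map (algebraMap ℚ (Matrix (Fin l) (Fin l) ℚ))
          (((k.factorial : ℚ)⁻¹) • (binomSeries x * log1p ^ k)) *
        PowerSeries.mk (fun N => ∑ β ∈ Finset.range (N + 1),
          (((β.factorial : ℚ)⁻¹) * PowerSeries.coeff N (log1p ^ β)) •
            gradePart μ (R ^ β) t) := by
  refine PowerSeries.ext fun N => ?_
  rw [PowerSeries.coeff_mul, Finset.Nat.sum_antidiagonal_eq_sum_range_succ_mk, coeff_mk]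
  simp only [coeff_mk, PowerSeries.coeff_map, map_smul, smul_eq_mul]
  -- RHS transformation
  have hterm : ∀ i ∈ range (N+1),
      (algebraMap ℚ (Matrix (Fin l) (Fin l) ℚ)) ((k.factorial:ℚ)⁻¹ * coeff i (binomSeries x * log1p^k)) *
        (∑ β ∈ range (N-i+1), ((β.factorial:ℚ)⁻¹ * coeff (N-i) (log1p^β)) • gradePart μ (R ^ β) t)
      = ∑ β ∈ range (N+1),
          ((((k.factorial:ℚ)⁻¹ * coeff i (binomSeries x * log1p^k)) *
            ((β.factorial:ℚ)⁻¹ * coeff (N-i) (log1p^β)))) • gradePart μ (R ^ β) t := by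
    intro i hi
    rw [Finset.mem_range] at hi
    rw [← Algebra.smul_def, Finset.smul_sum]
    simp only [smul_smul]
    apply Finset.sum_subset (Finset.range_subset_range.mpr (by omega))
    intro β hβ hβ'
    rw [Finset.mem_range] at hβ hβ'
    have hz : coeff (N-i) (log1p^β) = 0 := by
      rw [coeff_log_pow, stirling1_eq_zero (by omega)]
      simp
    rw [hz]
    simp
  rw [Finset.sum_congr rfl hterm, Finset.sum_comm]
  -- now RHS = Σ_β Σ_i (..) • gradePart μ (R ^ β) t
  have hβterm : ∀ β ∈ range (N+1),
      (∑ i ∈ range (N+1),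
          ((((k.factorial:ℚ)⁻¹ * coeff i (binomSeries x * log1p^k)) *
            ((β.factorial:ℚ)⁻¹ * coeff (N-i) (log1p^β)))) • gradePart μ (R ^ β) t)
      = ∑ k₂ ∈ Finset.Icc (k+β) N,
          (((k+β).choose k : ℚ) * ((-1:ℚ)^(k₂+(k+β)) * (stirling1 k₂ (k+β) : ℚ)
            / (k₂.factorial : ℚ)) * myChoose x (N-k₂)) • gradePart μ (R ^ β) t := by
    intro β _
    rw [← Finset.sum_smul, key_scalar, Finset.sum_smul]
    refine (Finset.sum_subset ?_ ?_).symm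
    · intro a ha
      rw [Finset.mem_Icc] at ha
      rw [Finset.mem_range]
      omega
    · intro k₂ hk₂ hk₂'
      rw [Finset.mem_range] at hk₂
      rw [Finset.mem_Icc] at hk₂'
      rw [stirling1_eq_zero (show k₂ < k + β by omega)]
      simp
  rw [Finset.sum_congr rfl hβterm]
  -- shrink β range
  rw [← Finset.sum_subset (Finset.range_subset_range.mpr (show N+1-k ≤ N+1 by omega))
    (by
      intro β hβ hβ'
      rw [Finset.mem_range] at hβ hβ'
      rw [Finset.Icc_eq_empty (show ¬ (k + β ≤ N) by omega), Finset.sum_empty])]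
  -- LHS: convert Icc k N to range
  rw [← Finset.Ico_add_one_right_eq_Icc, Finset.sum_Ico_eq_sum_range]
  apply Finset.sum_congr rfl
  intro β hβ
  rw [Finset.mem_range] at hβ
  apply Finset.sum_congr rfl
  intro k₂ hk₂
  rw [Finset.mem_Icc] at hk₂
  rw [Nat.add_sub_cancel_left, neg_one_pow_sub' hk₂.1]
  ring_nf
end
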